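/- Let M ≥ 2 be an integer, a ∈ ℝ, and x > 0 a real number, and let A = {a + i·x : i = 0, 1, …, M−1} be the arithmetic progression of length M with first term a and common difference x. Then C(A) = ⌈log₂ M⌉. -/

import Mathlib

/-- The (additive) complexity of a set `A` of reals: the smallest positive integer `θ`
for which there exist reals `x 1, ..., x θ, y 1, ..., y θ` with
`A ⊆ {x 1, y 1} + ... + {x θ, y θ}` (Minkowski sumset). -/
noncomputable def complexity (A : Set ℝ) : ℕ :=
  sInf {θ : ℕ | 0 < θ ∧ ∃ x y : Fin θ → ℝ,
    A ⊆ {t : ℝ | ∃ z : Fin θ → ℝ, (∀ i, z i = x i ∨ z i = y i) ∧ t = ∑ i, z i}}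

/-- Every `i < 2^n` can be written as a signed sum of powers of two times `x`. -/
lemma binary_rep (x : ℝ) : ∀ n : ℕ, ∀ i : ℕ, i < 2 ^ n →
    ∃ z : Fin n → ℝ, (∀ j, z j = 0 ∨ z j = 2 ^ (j : ℕ) * x) ∧ (∑ j, z j) = (i : ℝ) * x := by
  intro n
  induction n with
  | zero =>
    intro i hi
    interval_cases i
    exact ⟨fun j => 0, fun j => Or.inl rfl, by simp⟩
  | succ n ih =>
    intro i hi
    by_cases h : i < 2 ^ n
    · obtain ⟨z, hz, hsum⟩ := ih i h
      refine ⟨Fin.snoc z 0, ?_, ?_⟩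
      · intro j
        refine Fin.lastCases ?_ ?_ j
        · simp
        · intro j'
          simpa using hz j'
      · rw [Fin.sum_univ_castSucc]
        simp [hsum]
    · push_neg at h
      have h2 : i - 2 ^ n < 2 ^ n := by
        have : i < 2 ^ n + 2 ^ n := by
          have := hi; rw [pow_succ] at this; omega
        omega
      obtain ⟨z, hz, hsum⟩ := ih (i - 2 ^ n) h2
      refine ⟨Fin.snoc z (2 ^ n * x), ?_, ?_⟩
      · intro j
        refine Fin.lastCases ?_ ?_ j
        · right; simp
        · intro j'
          simpa using hz j'
      · rw [Fin.sum_univ_castSucc]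
        simp only [Fin.snoc_castSucc, Fin.snoc_last, hsum]
        have : ((i - 2 ^ n : ℕ) : ℝ) = (i : ℝ) - 2 ^ n := by
          push_cast [Nat.cast_sub h]; ring
        rw [this]; ring

/-- Arithmetic progressions of length `M` have the lowest possible complexity
`⌈log₂ M⌉`. -/
theorem stmt_11 (M : ℕ) (hM : 2 ≤ M) (a x : ℝ) (hx : 0 < x) :
    complexity {t : ℝ | ∃ i : ℕ, i < M ∧ t = a + (i : ℝ) * x} = Nat.clog 2 M := by
  classical
  set θ := Nat.clog 2 M with hθ
  have hθpos : 0 < θ := Nat.clog_pos one_lt_two hM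
  have hMle : M ≤ 2 ^ θ := Nat.le_pow_clog one_lt_two M
  -- membership: θ works
  have hmem : θ ∈ {n : ℕ | 0 < n ∧ ∃ xf yf : Fin n → ℝ,
      {t : ℝ | ∃ i : ℕ, i < M ∧ t = a + (i : ℝ) * x} ⊆
        {t : ℝ | ∃ z : Fin n → ℝ, (∀ i, z i = xf i ∨ z i = yf i) ∧ t = ∑ i, z i}} := by
    refine ⟨hθpos, fun j => if (j : ℕ) = 0 then a else 0,
      fun j => (if (j : ℕ) = 0 then a else 0) + 2 ^ (j : ℕ) * x, ?_⟩
    rintro t ⟨i, hi, rfl⟩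
    obtain ⟨z, hz, hsum⟩ := binary_rep x θ i (lt_of_lt_of_le hi hMle)
    refine ⟨fun j => (if (j : ℕ) = 0 then a else 0) + z j, ?_, ?_⟩
    · intro j
      dsimp only
      rcases hz j with h | h
      · left; rw [h, add_zero]
      · right; rw [h]
    · dsimp only
      rw [Finset.sum_add_distrib, hsum]
      congr 1
      have he : ∀ j : Fin θ, (if (j : ℕ) = 0 then a else 0)
          = if j = (⟨0, hθpos⟩ : Fin θ) then a else 0 := by
        intro j; simp [Fin.ext_iff]
      rw [Finset.sum_congr rfl fun j _ => he j,
        Finset.sum_ite_eq' Finset.univ (⟨0, hθpos⟩ : Fin θ) (fun _ => a)]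
      simp
  -- lower bound: any n in the set satisfies θ ≤ n
  have hlb : ∀ n ∈ {n : ℕ | 0 < n ∧ ∃ xf yf : Fin n → ℝ,
      {t : ℝ | ∃ i : ℕ, i < M ∧ t = a + (i : ℝ) * x} ⊆
        {t : ℝ | ∃ z : Fin n → ℝ, (∀ i, z i = xf i ∨ z i = yf i) ∧ t = ∑ i, z i}},
      θ ≤ n := by
    rintro n ⟨-, xf, yf, hsub⟩
    rw [hθ, Nat.clog_le_iff_le_pow one_lt_two]
    -- build an injection Fin M → (Fin n → Bool)
    have hrep : ∀ i : Fin M, ∃ b : Fin n → Bool,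
        (∑ j, if b j then xf j else yf j) = a + (i : ℝ) * x := by
      intro i
      obtain ⟨z, hz, hsum⟩ := hsub ⟨i, i.2, rfl⟩
      refine ⟨fun j => decide (z j = xf j), ?_⟩
      rw [hsum]
      refine Finset.sum_congr rfl fun j _ => ?_
      dsimp only
      by_cases h : z j = xf j
      · simp [h]
      · rcases hz j with h' | h'
        · exact absurd h' h
        · simp only [h, decide_eq_true_eq, if_false]
          exact h'.symm
    choose b hb using hrep
    have hbinj : Function.Injective b := by
      intro i i' h
      have : a + (i : ℝ) * x = a + (i' : ℝ) * x := by rw [← hb i, ← hb i', h]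
      have : (i : ℝ) = (i' : ℝ) := by
        exact mul_right_cancel₀ hx.ne' (add_left_cancel this)
      exact Fin.ext (by exact_mod_cast this)
    calc M = Fintype.card (Fin M) := (Fintype.card_fin M).symm
      _ ≤ Fintype.card (Fin n → Bool) := Fintype.card_le_of_injective b hbinj
      _ = 2 ^ n := by simp
  exact le_antisymm (Nat.sInf_le hmem) (le_csInf ⟨θ, hmem⟩ hlb)
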